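/- arXiv:2308.15465 — 5 statements merged into one kernel-verified Lean document; each statement's English description precedes it below -/
import Mathlib

section
/- The single level equation S i₁ ≐ i₂ ⊔ i₃ (with i₁, i₂, i₃ distinct variables) is solvable but admits no most general unifier. Consequently, not every solvable universe level unification problem has a most general unifier. -/
/-- Universe level expressions: `l ::= i | 0 | S l | l ⊔ l'`. -/
inductive Lvl : Type
  | var : ℕ → Lvl
  | zero : Lvl
  | succ : Lvl → Lvl
  | max : Lvl → Lvl → Lvl
  deriving DecidableEq

namespace Lvl

/-- Interpretation of a level under an assignment `φ` of naturals to variables. -/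
def eval (φ : ℕ → ℕ) : Lvl → ℕ
  | .var i => φ i
  | .zero => 0
  | .succ l => l.eval φ + 1
  | .max a b => Nat.max (a.eval φ) (b.eval φ)

/-- Semantic equivalence: equal value under every assignment. -/
def Equiv (l l' : Lvl) : Prop := ∀ φ : ℕ → ℕ, l.eval φ = l'.eval φ

/-- Application of a level substitution. -/
def subst (θ : ℕ → Lvl) : Lvl → Lvl
  | .var i => θ i
  | .zero => .zero
  | .succ l => .succ (l.subst θ)
  | .max a b => .max (a.subst θ) (b.subst θ)

/-- Free variables of a level. -/
def fv : Lvl → Finset ℕ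
  | .var i => {i}
  | .zero => ∅
  | .succ l => l.fv
  | .max a b => a.fv ∪ b.fv

/-- The constant level `n`, i.e. `Sⁿ 0`. -/
def const (n : ℕ) : Lvl := Lvl.succ^[n] Lvl.zero

/-- The level `n + i`, i.e. `Sⁿ i`. -/
def atom (n i : ℕ) : Lvl := Lvl.succ^[n] (Lvl.var i)

end Lvl

/-- `θ` is a unifier of the equation `l₁ ≐ l₂`. -/
def Unifies (θ : ℕ → Lvl) (l₁ l₂ : Lvl) : Prop := Lvl.Equiv (l₁.subst θ) (l₂.subst θ)

/-- `θ` is a most general unifier of the equation `l₁ ≐ l₂`. -/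
def IsMGU (θ : ℕ → Lvl) (l₁ l₂ : Lvl) : Prop :=
  Unifies θ l₁ l₂ ∧ ∀ τ, Unifies τ l₁ l₂ →
    ∃ θ' : ℕ → Lvl, ∀ i ∈ l₁.fv ∪ l₂.fv, Lvl.Equiv ((θ i).subst θ') (τ i)

/-- The level `p ⊔ (n₁ + i₁) ⊔ ... ⊔ (n_m + i_m)` given by canonical-form data. -/
def buildCanon (p : ℕ) (L : List (ℕ × ℕ)) : Lvl :=
  L.foldr (fun a acc => Lvl.max (Lvl.atom a.1 a.2) acc) (Lvl.const p)

/-- The equation `buildCanon p₁ L₁ ≐ buildCanon p₂ L₂` is in canonical form: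
both sides canonical (coefficients bounded by the constant coefficient, variables
pairwise distinct), shared variables have equal coefficients on both sides, and
some coefficient on some side equals `0`. -/
def CanonEqn (p₁ : ℕ) (L₁ : List (ℕ × ℕ)) (p₂ : ℕ) (L₂ : List (ℕ × ℕ)) : Prop :=
  (∀ a ∈ L₁, a.1 ≤ p₁) ∧ (L₁.map Prod.snd).Nodup ∧
  (∀ a ∈ L₂, a.1 ≤ p₂) ∧ (L₂.map Prod.snd).Nodup ∧
  (∀ a ∈ L₁, ∀ b ∈ L₂, a.2 = b.2 → a.1 = b.1) ∧
  0 ∈ (p₁ :: p₂ :: (L₁ ++ L₂).map Prod.fst)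

lemma Lvl.eval_subst (θ : ℕ → Lvl) (φ : ℕ → ℕ) (l : Lvl) :
    (l.subst θ).eval φ = l.eval (fun i => (θ i).eval φ) := by
  induction l <;> simp [Lvl.subst, Lvl.eval, *]

lemma Lvl.eval_mono {φ φ' : ℕ → ℕ} (h : ∀ i, φ i ≤ φ' i) (l : Lvl) :
    l.eval φ ≤ l.eval φ' := by
  induction l with
  | var i => exact h i
  | zero => exact le_refl _
  | succ l ih => exact Nat.succ_le_succ ih
  | max a b iha ihb => exact max_le_max iha ihb

/-- The level equation `S i₁ ≐ i₂ ⊔ i₃` (with `i₁, i₂, i₃` distinct variables) is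
solvable but admits no most general unifier; consequently, not every solvable
universe level unification equation has a most general unifier. -/
theorem no_mgu_example :
    ((∃ θ, Unifies θ (Lvl.succ (Lvl.var 0)) (Lvl.max (Lvl.var 1) (Lvl.var 2))) ∧
      ¬ ∃ θ, IsMGU θ (Lvl.succ (Lvl.var 0)) (Lvl.max (Lvl.var 1) (Lvl.var 2))) ∧
    ¬ ∀ l₁ l₂ : Lvl, (∃ θ, Unifies θ l₁ l₂) → ∃ θ, IsMGU θ l₁ l₂ := by
  have hfv : (Lvl.succ (Lvl.var 0)).fv ∪ (Lvl.max (Lvl.var 1) (Lvl.var 2)).fv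
      = ({0, 1, 2} : Finset ℕ) := by decide
  have main : ((∃ θ, Unifies θ (Lvl.succ (Lvl.var 0)) (Lvl.max (Lvl.var 1) (Lvl.var 2))) ∧
      ¬ ∃ θ, IsMGU θ (Lvl.succ (Lvl.var 0)) (Lvl.max (Lvl.var 1) (Lvl.var 2))) := by
    constructor
    · refine ⟨fun i => if i = 1 then Lvl.succ (Lvl.var 0) else
        if i = 2 then Lvl.zero else Lvl.var i, ?_⟩
      intro φ
      simp [Lvl.subst, Lvl.eval]
    · rintro ⟨θ, hu, hmgu⟩
      -- two specific unifiers
      set τ₁ : ℕ → Lvl := fun i => if i = 1 then Lvl.succ (Lvl.var 0) else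
        if i = 2 then Lvl.zero else Lvl.var i with hτ₁
      set τ₂ : ℕ → Lvl := fun i => if i = 2 then Lvl.succ (Lvl.var 0) else
        if i = 1 then Lvl.zero else Lvl.var i with hτ₂
      have hu₁ : Unifies τ₁ (Lvl.succ (Lvl.var 0)) (Lvl.max (Lvl.var 1) (Lvl.var 2)) := by
        intro φ; simp [Lvl.subst, Lvl.eval, hτ₁]
      have hu₂ : Unifies τ₂ (Lvl.succ (Lvl.var 0)) (Lvl.max (Lvl.var 1) (Lvl.var 2)) := by
        intro φ; simp [Lvl.subst, Lvl.eval, hτ₂]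
      obtain ⟨θ', hθ'⟩ := hmgu τ₁ hu₁
      obtain ⟨θ'', hθ''⟩ := hmgu τ₂ hu₂
      rw [hfv] at hθ' hθ''
      -- θ 2 evaluates to 0 under ψ₁, θ 1 evaluates to 0 under ψ₂
      set ψ₁ : ℕ → ℕ := fun i => (θ' i).eval id with hψ₁
      set ψ₂ : ℕ → ℕ := fun i => (θ'' i).eval id with hψ₂
      have e1 : (θ 2).eval ψ₁ = 0 := by
        have := hθ' 2 (by decide) id
        rw [Lvl.eval_subst] at this
        simpa [hτ₁, Lvl.eval] using this
      have e2 : (θ 1).eval ψ₂ = 0 := by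
        have := hθ'' 1 (by decide) id
        rw [Lvl.eval_subst] at this
        simpa [hτ₂, Lvl.eval] using this
      set ψ : ℕ → ℕ := fun i => min (ψ₁ i) (ψ₂ i) with hψ
      have m1 : (θ 1).eval ψ ≤ (θ 1).eval ψ₂ :=
        Lvl.eval_mono (fun i => Nat.min_le_right _ _) _
      have m2 : (θ 2).eval ψ ≤ (θ 2).eval ψ₁ :=
        Lvl.eval_mono (fun i => Nat.min_le_left _ _) _
      have := hu ψ
      simp only [Lvl.subst, Lvl.eval] at this
      have hm : (Lvl.eval ψ (θ 1)).max (Lvl.eval ψ (θ 2)) ≤ 0 :=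
        max_le (le_trans m1 e2.le) (le_trans m2 e1.le)
      omega
  exact ⟨main, fun h => main.2 (h _ _ main.1)⟩
end

section
/- Consider the level equation n ⊔ i ≐ l in canonical form, where n is a constant, i is a variable, and the constant coefficient of l is strictly greater than n. Then the substitution τ = (i ↦ l) is a most general unifier of this equation. -/
lemma Lvl.eval_subst_s6 (φ : ℕ → ℕ) (θ : ℕ → Lvl) (t : Lvl) :
    (t.subst θ).eval φ = t.eval (fun j => (θ j).eval φ) := by
  induction t with
  | var j => rfl
  | zero => rfl
  | succ l ih => simp [Lvl.subst, Lvl.eval, ih]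
  | max a b iha ihb => simp [Lvl.subst, Lvl.eval, iha, ihb]

lemma Lvl.eval_const (φ : ℕ → ℕ) (n : ℕ) : (Lvl.const n).eval φ = n := by
  induction n with
  | zero => rfl
  | succ m ih =>
    simp only [Lvl.const, Function.iterate_succ', Function.comp_apply] at *
    simp [Lvl.eval, ih]

lemma Lvl.eval_atom (φ : ℕ → ℕ) (a j : ℕ) : (Lvl.atom a j).eval φ = a + φ j := by
  induction a with
  | zero => simp [Lvl.atom, Lvl.eval]
  | succ m ih =>
    simp only [Lvl.atom, Function.iterate_succ', Function.comp_apply] at *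
    simp [Lvl.eval, ih]; omega

lemma Lvl.subst_const (θ : ℕ → Lvl) (n : ℕ) : (Lvl.const n).subst θ = Lvl.const n := by
  induction n with
  | zero => rfl
  | succ m ih =>
    simp only [Lvl.const, Function.iterate_succ', Function.comp_apply] at *
    simp [Lvl.subst, ih]

lemma const_le_eval_buildCanon (φ : ℕ → ℕ) (p : ℕ) (L : List (ℕ × ℕ)) :
    p ≤ (buildCanon p L).eval φ := by
  induction L with
  | nil => simp [buildCanon, Lvl.eval_const]
  | cons a L ih =>
    simp only [buildCanon, List.foldr_cons] at *
    exact le_max_of_le_right ih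

lemma atom_le_eval_buildCanon (φ : ℕ → ℕ) (p : ℕ) (L : List (ℕ × ℕ))
    {a : ℕ × ℕ} (ha : a ∈ L) : a.1 + φ a.2 ≤ (buildCanon p L).eval φ := by
  induction L with
  | nil => simp at ha
  | cons b L ih =>
    simp only [buildCanon, List.foldr_cons, Lvl.eval]
    rcases List.mem_cons.mp ha with h | h
    · subst h; rw [Lvl.eval_atom]; exact le_max_left _ _
    · exact le_max_of_le_right (ih h)

lemma eval_buildCanon_le (φ : ℕ → ℕ) (p : ℕ) (L : List (ℕ × ℕ)) {M : ℕ}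
    (hp : p ≤ M) (h : ∀ a ∈ L, a.1 + φ a.2 ≤ M) :
    (buildCanon p L).eval φ ≤ M := by
  induction L with
  | nil => simp [buildCanon, Lvl.eval_const, hp]
  | cons b L ih =>
    simp only [buildCanon, List.foldr_cons, Lvl.eval]
    refine max_le ?_ (ih fun a ha => h a (List.mem_cons_of_mem _ ha))
    rw [Lvl.eval_atom]; exact h b List.mem_cons_self

/-- If every occurrence of `i` in `L` has coefficient `0`, then bumping `φ i`
up to the value of `buildCanon p L` does not change the value. -/
lemma eval_buildCanon_update (φ : ℕ → ℕ) (p i : ℕ) (L : List (ℕ × ℕ))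
    (hcoef : ∀ a ∈ L, a.2 = i → a.1 = 0) :
    (buildCanon p L).eval (fun j => if j = i then (buildCanon p L).eval φ else φ j)
      = (buildCanon p L).eval φ := by
  set V := (buildCanon p L).eval φ with hV
  set ψ : ℕ → ℕ := fun j => if j = i then V else φ j with hψ
  refine le_antisymm ?_ ?_
  · refine eval_buildCanon_le ψ p L (le_trans (const_le_eval_buildCanon φ p L) le_rfl) ?_
    intro a ha
    by_cases hai : a.2 = i
    · have h0 := hcoef a ha hai
      simp [hψ, hai, h0]
    · have : ψ a.2 = φ a.2 := by simp [hψ, hai]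
      rw [this]; exact atom_le_eval_buildCanon φ p L ha
  · refine eval_buildCanon_le φ p L (const_le_eval_buildCanon ψ p L) ?_
    intro a ha
    by_cases hai : a.2 = i
    · have h0 := hcoef a ha hai
      have h1 : a.1 + φ a.2 ≤ V := atom_le_eval_buildCanon φ p L ha
      have h2 : a.1 + ψ a.2 ≤ (buildCanon p L).eval ψ := atom_le_eval_buildCanon ψ p L ha
      have h3 : ψ a.2 = V := by simp [hψ, hai]
      omega
    · have h2 : a.1 + ψ a.2 ≤ (buildCanon p L).eval ψ := atom_le_eval_buildCanon ψ p L ha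
      have : ψ a.2 = φ a.2 := by simp [hψ, hai]
      omega

/-- For a level equation `n ⊔ i ≐ l` in canonical form with `n` strictly smaller
than the constant coefficient of `l` (here `l = buildCanon p L`, whose constant
coefficient is `p`), the substitution `i ↦ l` is a most general unifier. -/
theorem mgu_const_max_var (n i p : ℕ) (L : List (ℕ × ℕ))
    (hcanon : CanonEqn n [(0, i)] p L) (hlt : n < p) :
    IsMGU (fun j => if j = i then buildCanon p L else Lvl.var j)
      (Lvl.max (Lvl.const n) (Lvl.var i)) (buildCanon p L) := by
  obtain ⟨-, -, -, -, hshare, -⟩ := hcanon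
  have hcoef : ∀ a ∈ L, a.2 = i → a.1 = 0 := by
    intro a ha hai
    exact (hshare (0, i) (by simp) a ha hai.symm).symm
  constructor
  · -- it is a unifier
    intro φ
    simp only [Lvl.subst, Lvl.eval, Lvl.subst_const, Lvl.eval_const, eq_self_iff_true, if_true]
    rw [Lvl.eval_subst_s6]
    have heq : (fun j => (Lvl.eval φ (if j = i then buildCanon p L else Lvl.var j)))
        = (fun j => if j = i then (buildCanon p L).eval φ else φ j) := by
      funext j; by_cases hj : j = i <;> simp [hj, Lvl.eval]
    rw [heq, eval_buildCanon_update φ p i L hcoef]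
    have hp : p ≤ (buildCanon p L).eval φ := const_le_eval_buildCanon φ p L
    exact Nat.max_eq_right (by omega)
  · -- most general
    intro τ hτ
    refine ⟨τ, fun j _ φ => ?_⟩
    by_cases hj : j = i
    · subst hj
      simp only [eq_self_iff_true, if_true]
      have h := hτ φ
      simp only [Lvl.subst, Lvl.eval, Lvl.subst_const, Lvl.eval_const] at h
      have hp : p ≤ ((buildCanon p L).subst τ).eval φ := by
        rw [Lvl.eval_subst_s6]; exact const_le_eval_buildCanon _ p L
      rcases Nat.le_total ((τ j).eval φ) n with hm | hm
      · rw [show n.max ((τ j).eval φ) = n from max_eq_left hm] at h; omega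
      · rw [show n.max ((τ j).eval φ) = (τ j).eval φ from max_eq_right hm] at h; omega
    · simp [hj, Lvl.subst]
end

section
/- Let l₁ ≐ l₂ be a level equation in canonical form where the right side l₂ contains at least two distinct variables and the constant coefficient of l₁ is strictly greater than that of l₂. Then the equation is solvable but admits no most general unifier. -/
namespace Lvl

lemma eval_const_s9 (n : ℕ) (φ : ℕ → ℕ) : (const n).eval φ = n := by
  induction n with
  | zero => rfl
  | succ n ih =>
    rw [const, Function.iterate_succ_apply']
    simp only [eval]
    rw [← const, ih]

lemma eval_atom_s9 (n i : ℕ) (φ : ℕ → ℕ) : (atom n i).eval φ = n + φ i := by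
  induction n with
  | zero => simp [atom, eval]
  | succ n ih =>
    rw [atom, Function.iterate_succ_apply']
    simp only [eval]
    rw [← atom, ih]
    omega

lemma eval_subst_s9 (θ : ℕ → Lvl) (φ : ℕ → ℕ) (l : Lvl) :
    (l.subst θ).eval φ = l.eval (fun k => (θ k).eval φ) := by
  induction l with
  | var i => rfl
  | zero => rfl
  | succ l ih => simp [subst, eval, ih]
  | max a b iha ihb => simp [subst, eval, iha, ihb]

lemma eval_mono_s9 {φ φ' : ℕ → ℕ} (h : ∀ k, φ k ≤ φ' k) (l : Lvl) :
    l.eval φ ≤ l.eval φ' := by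
  induction l with
  | var i => exact h i
  | zero => exact le_rfl
  | succ l ih => simpa [eval] using ih
  | max a b iha ihb => exact max_le_max iha ihb

end Lvl

lemma le_eval_buildCanon (p : ℕ) (L : List (ℕ × ℕ)) (φ : ℕ → ℕ) :
    p ≤ (buildCanon p L).eval φ := by
  induction L with
  | nil => simp [buildCanon, Lvl.eval_const_s9]
  | cons a L ih =>
    simp only [buildCanon, List.foldr_cons, Lvl.eval] at *
    exact le_trans ih (le_max_right _ _)

lemma mem_le_eval_buildCanon {p : ℕ} {L : List (ℕ × ℕ)} {c : ℕ × ℕ} (hc : c ∈ L)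
    (φ : ℕ → ℕ) : c.1 + φ c.2 ≤ (buildCanon p L).eval φ := by
  induction L with
  | nil => simp at hc
  | cons a L ih =>
    simp only [buildCanon, List.foldr_cons, Lvl.eval] at *
    rcases List.mem_cons.mp hc with h | h
    · subst h; rw [Lvl.eval_atom_s9]; exact le_max_left _ _
    · exact le_trans (ih h) (le_max_right _ _)

lemma eval_buildCanon_le_s9 {p m : ℕ} {L : List (ℕ × ℕ)} {φ : ℕ → ℕ} (hp : p ≤ m)
    (hL : ∀ c ∈ L, c.1 + φ c.2 ≤ m) : (buildCanon p L).eval φ ≤ m := by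
  induction L with
  | nil => simpa [buildCanon, Lvl.eval_const_s9] using hp
  | cons a L ih =>
    simp only [buildCanon, List.foldr_cons, Lvl.eval] at *
    refine max_le ?_ (ih fun c hc => hL c (List.mem_cons.mpr (Or.inr hc)))
    rw [Lvl.eval_atom_s9]
    exact hL a (List.mem_cons.mpr (Or.inl rfl))

lemma mem_fv_buildCanon {p : ℕ} {L : List (ℕ × ℕ)} {c : ℕ × ℕ} (hc : c ∈ L) :
    c.2 ∈ (buildCanon p L).fv := by
  induction L with
  | nil => simp at hc
  | cons a L ih =>
    simp only [buildCanon, List.foldr_cons, Lvl.fv] at *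
    rcases List.mem_cons.mp hc with h | h
    · subst h
      refine Finset.mem_union_left _ ?_
      have : ∀ n, (Lvl.atom n c.2).fv = {c.2} := by
        intro n
        induction n with
        | zero => rfl
        | succ n ihn => rw [Lvl.atom, Function.iterate_succ_apply']; exact ihn
      rw [this]; exact Finset.mem_singleton_self _
    · exact Finset.mem_union_right _ (ih h)

/-- The one-variable unifier: send `a.2` to `p₁ - a.1` and everything else to `0`. -/
def tauSub (p₁ : ℕ) (a : ℕ × ℕ) : ℕ → Lvl :=
  fun k => if k = a.2 then Lvl.const (p₁ - a.1) else Lvl.const 0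

lemma tauSub_unifies (p₁ p₂ : ℕ) (L₁ L₂ : List (ℕ × ℕ))
    (hcanon : CanonEqn p₁ L₁ p₂ L₂) (hgt : p₂ < p₁) {a : ℕ × ℕ} (ha : a ∈ L₂) :
    Unifies (tauSub p₁ a) (buildCanon p₁ L₁) (buildCanon p₂ L₂) := by
  obtain ⟨h1, hnd1, h2, hnd2, hshare, -⟩ := hcanon
  have ha1 : a.1 ≤ p₂ := h2 a ha
  intro φ
  rw [Lvl.eval_subst_s9, Lvl.eval_subst_s9]
  set ψ : ℕ → ℕ := fun k => (tauSub p₁ a k).eval φ with hψ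
  have hψ_eq : ∀ k, ψ k = if k = a.2 then p₁ - a.1 else 0 := by
    intro k
    simp only [hψ, tauSub]
    split <;> rw [Lvl.eval_const_s9]
  have hL : (buildCanon p₁ L₁).eval ψ = p₁ := by
    apply le_antisymm
    · apply eval_buildCanon_le_s9 le_rfl
      intro c hc
      rw [hψ_eq]
      split
      · next h =>
        have : c.1 = a.1 := hshare c hc a ha h
        omega
      · have := h1 c hc; omega
    · exact le_eval_buildCanon _ _ _
  have hR : (buildCanon p₂ L₂).eval ψ = p₁ := by
    apply le_antisymm
    · apply eval_buildCanon_le_s9 (le_of_lt hgt)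
      intro c hc
      rw [hψ_eq]
      split
      · next h =>
        have : c = a := List.inj_on_of_nodup_map hnd2 hc ha h
        subst this; omega
      · have := h2 c hc; omega
    · have := mem_le_eval_buildCanon (p := p₂) ha ψ
      rw [hψ_eq] at this
      rw [if_pos rfl] at this
      omega
  rw [hL, hR]

/-- If a level equation `l₁ ≐ l₂` in canonical form is such that `l₂` contains at
least two distinct variables and the constant coefficient of `l₁` is strictly
greater than that of `l₂`, then the equation is solvable but has no most general
unifier. -/
theorem solvable_no_mgu_two_vars (p₁ p₂ : ℕ) (L₁ L₂ : List (ℕ × ℕ))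
    (hcanon : CanonEqn p₁ L₁ p₂ L₂)
    (htwo : 2 ≤ L₂.length) (hgt : p₂ < p₁) :
    (∃ θ, Unifies θ (buildCanon p₁ L₁) (buildCanon p₂ L₂)) ∧
      ¬ ∃ θ, IsMGU θ (buildCanon p₁ L₁) (buildCanon p₂ L₂) := by
  -- pick two elements of L₂ with distinct variables
  obtain ⟨a, b, rest, rfl⟩ : ∃ a b rest, L₂ = a :: b :: rest := by
    match L₂, htwo with
    | a :: b :: rest, _ => exact ⟨a, b, rest, rfl⟩
  have ha : a ∈ a :: b :: rest := List.mem_cons_self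
  have hb : b ∈ a :: b :: rest := List.mem_cons.mpr (Or.inr (List.mem_cons_self))
  have hab : a.2 ≠ b.2 := by
    have hnd2 := hcanon.2.2.2.1
    simp only [List.map_cons, List.nodup_cons, List.mem_cons, List.mem_map] at hnd2
    intro h
    exact hnd2.1 (Or.inl h)
  constructor
  · exact ⟨tauSub p₁ a, tauSub_unifies p₁ p₂ L₁ _ hcanon hgt ha⟩
  · rintro ⟨θ, hθu, hθmgu⟩
    obtain ⟨θa, hθa⟩ := hθmgu _ (tauSub_unifies p₁ p₂ L₁ _ hcanon hgt ha)
    obtain ⟨θb, hθb⟩ := hθmgu _ (tauSub_unifies p₁ p₂ L₁ _ hcanon hgt hb)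
    set ψ : ℕ → ℕ := fun k => min ((θa k).eval fun _ => 0) ((θb k).eval fun _ => 0)
      with hψdef
    -- all variables of L₂ evaluate to 0 under ψ after θ
    have key : ∀ c ∈ a :: b :: rest, (θ c.2).eval ψ = 0 := by
      intro c hc
      have hcfv : c.2 ∈ (buildCanon p₁ L₁).fv ∪ (buildCanon p₂ (a :: b :: rest)).fv :=
        Finset.mem_union_right _ (mem_fv_buildCanon hc)
      by_cases hca : c.2 = a.2
      · -- use θb: tauSub p₁ b sends c.2 (≠ b.2) to const 0
        have hcb : c.2 ≠ b.2 := hca ▸ hab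
        have := hθb c.2 hcfv (fun _ => 0)
        rw [Lvl.eval_subst_s9] at this
        simp only [tauSub, if_neg hcb, Lvl.eval_const_s9] at this
        have hmono : (θ c.2).eval ψ ≤ (θ c.2).eval (fun k => (θb k).eval fun _ => 0) :=
          Lvl.eval_mono_s9 (fun k => min_le_right _ _) _
        omega
      · have := hθa c.2 hcfv (fun _ => 0)
        rw [Lvl.eval_subst_s9] at this
        simp only [tauSub, if_neg hca, Lvl.eval_const_s9] at this
        have hmono : (θ c.2).eval ψ ≤ (θ c.2).eval (fun k => (θa k).eval fun _ => 0) :=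
          Lvl.eval_mono_s9 (fun k => min_le_left _ _) _
        omega
    have hR : ((buildCanon p₂ (a :: b :: rest)).subst θ).eval ψ ≤ p₂ := by
      rw [Lvl.eval_subst_s9]
      apply eval_buildCanon_le_s9 le_rfl
      intro c hc
      rw [key c hc]
      have := hcanon.2.2.1 c hc
      omega
    have hL : p₁ ≤ ((buildCanon p₁ L₁).subst θ).eval ψ := by
      rw [Lvl.eval_subst_s9]
      exact le_eval_buildCanon _ _ _
    have := hθu ψ
    omega
end

section
/- Let l₁ ≐ l₂ be a non-trivial level equation in canonical form whose two sides have equal constant coefficients that are strictly positive. Then the equation admits a unifier but no most general unifier. -/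
namespace LvlAux

lemma eval_subst (θ : ℕ → Lvl) (φ : ℕ → ℕ) : ∀ l : Lvl,
    Lvl.eval φ (l.subst θ) = Lvl.eval (fun i => Lvl.eval φ (θ i)) l
  | .var i => rfl
  | .zero => rfl
  | .succ l => by simp [Lvl.subst, Lvl.eval, eval_subst θ φ l]
  | .max a b => by simp [Lvl.subst, Lvl.eval, eval_subst θ φ a, eval_subst θ φ b]

lemma const_succ (n : ℕ) : Lvl.const (n + 1) = Lvl.succ (Lvl.const n) := by
  simp [Lvl.const, Function.iterate_succ_apply']

lemma atom_succ (n i : ℕ) : Lvl.atom (n + 1) i = Lvl.succ (Lvl.atom n i) := by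
  simp [Lvl.atom, Function.iterate_succ_apply']

lemma eval_const (φ : ℕ → ℕ) (n : ℕ) : Lvl.eval φ (Lvl.const n) = n := by
  induction n with
  | zero => rfl
  | succ n ih => rw [const_succ]; simp [Lvl.eval, ih]

lemma eval_atom (φ : ℕ → ℕ) (n i : ℕ) : Lvl.eval φ (Lvl.atom n i) = n + φ i := by
  induction n with
  | zero => simp [Lvl.atom, Lvl.eval]
  | succ n ih => rw [atom_succ]; simp [Lvl.eval, ih]; omega

lemma fv_atom (n i : ℕ) : (Lvl.atom n i).fv = {i} := by
  induction n with
  | zero => rfl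
  | succ n ih => rw [atom_succ]; simpa [Lvl.fv] using ih

lemma build_nil (p : ℕ) : buildCanon p [] = Lvl.const p := rfl

lemma build_cons (p : ℕ) (a : ℕ × ℕ) (L : List (ℕ × ℕ)) :
    buildCanon p (a :: L) = Lvl.max (Lvl.atom a.1 a.2) (buildCanon p L) := rfl

lemma le_eval_build_const (p : ℕ) (L : List (ℕ × ℕ)) (φ : ℕ → ℕ) :
    p ≤ Lvl.eval φ (buildCanon p L) := by
  induction L with
  | nil => simp [build_nil, eval_const]
  | cons a L ih => rw [build_cons]; simp [Lvl.eval]; omega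

lemma le_eval_build_atom {p : ℕ} {L : List (ℕ × ℕ)} {a : ℕ × ℕ} (ha : a ∈ L) (φ : ℕ → ℕ) :
    a.1 + φ a.2 ≤ Lvl.eval φ (buildCanon p L) := by
  induction L with
  | nil => simp at ha
  | cons b L ih =>
    rw [build_cons]
    rcases List.mem_cons.1 ha with h | h
    · subst h; simp [Lvl.eval, eval_atom]
    · simp [Lvl.eval]; exact Or.inr (ih h)

lemma eval_build_le {p c : ℕ} {L : List (ℕ × ℕ)} {φ : ℕ → ℕ} (hp : p ≤ c)
    (h : ∀ a ∈ L, a.1 + φ a.2 ≤ c) : Lvl.eval φ (buildCanon p L) ≤ c := by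
  induction L with
  | nil => simpa [build_nil, eval_const] using hp
  | cons a L ih =>
    rw [build_cons]
    simp only [Lvl.eval, Nat.max_le, eval_atom]
    exact ⟨h a (List.mem_cons_self), ih fun b hb => h b (List.mem_cons_of_mem a hb)⟩

lemma mem_fv_build {p : ℕ} {L : List (ℕ × ℕ)} {a : ℕ × ℕ} (ha : a ∈ L) :
    a.2 ∈ (buildCanon p L).fv := by
  induction L with
  | nil => simp at ha
  | cons b L ih =>
    rw [build_cons]
    rcases List.mem_cons.1 ha with h | h
    · subst h; simp [Lvl.fv, fv_atom]
    · simp [Lvl.fv]; exact Or.inr (ih h)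

lemma eval_mono {φ φ' : ℕ → ℕ} (h : ∀ x, φ x ≤ φ' x) : ∀ l : Lvl, Lvl.eval φ l ≤ Lvl.eval φ' l
  | .var i => h i
  | .zero => le_refl _
  | .succ l => by simpa [Lvl.eval] using eval_mono h l
  | .max a b => by
    simp only [Lvl.eval]
    exact max_le_max (eval_mono h a) (eval_mono h b)

lemma eval_zero_of_zero {φ φ' : ℕ → ℕ} (himp : ∀ x, φ x = 0 → φ' x = 0) :
    ∀ l : Lvl, Lvl.eval φ l = 0 → Lvl.eval φ' l = 0
  | .var i, h => himp i h
  | .zero, _ => rfl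
  | .succ l, h => by simp [Lvl.eval] at h
  | .max a b, h => by
    simp only [Lvl.eval, Nat.max_eq_zero_iff] at h ⊢
    exact ⟨eval_zero_of_zero himp a h.1, eval_zero_of_zero himp b h.2⟩

lemma eval_le_fv_sup {φ₀ : ℕ → ℕ} (φ : ℕ → ℕ) :
    ∀ l : Lvl, Lvl.eval φ₀ l = 0 → Lvl.eval φ l ≤ l.fv.sup φ
  | .var i, _ => by simp [Lvl.eval, Lvl.fv]
  | .zero, _ => Nat.zero_le _
  | .succ l, h => by simp [Lvl.eval] at h
  | .max a b, h => by
    simp only [Lvl.eval, Nat.max_eq_zero_iff] at h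
    simp only [Lvl.eval, Lvl.fv, Finset.sup_union]
    exact max_le_max (eval_le_fv_sup φ a h.1) (eval_le_fv_sup φ b h.2)

lemma exists_fv_pos {φ : ℕ → ℕ} :
    ∀ l : Lvl, Lvl.eval (fun _ => 0) l = 0 → 0 < Lvl.eval φ l → ∃ x ∈ l.fv, 0 < φ x
  | .var i, _, h => ⟨i, by simp [Lvl.fv], h⟩
  | .zero, _, h => by simp [Lvl.eval] at h
  | .succ l, h0, _ => by simp [Lvl.eval] at h0
  | .max a b, h0, h => by
    simp only [Lvl.eval, Nat.max_eq_zero_iff] at h0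
    simp only [Lvl.eval, lt_max_iff] at h
    rcases h with h | h
    · obtain ⟨x, hx, hp⟩ := exists_fv_pos a h0.1 h
      exact ⟨x, by simp [Lvl.fv]; exact Or.inl hx, hp⟩
    · obtain ⟨x, hx, hp⟩ := exists_fv_pos b h0.2 h
      exact ⟨x, by simp [Lvl.fv]; exact Or.inr hx, hp⟩

lemma le_eval_update {x T : ℕ} (φ : ℕ → ℕ) :
    ∀ l : Lvl, x ∈ l.fv → T ≤ Lvl.eval (Function.update φ x T) l
  | .var i, h => by
    simp [Lvl.fv] at h
    subst h
    simp [Lvl.eval]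
  | .zero, h => by simp [Lvl.fv] at h
  | .succ l, h => le_trans (le_eval_update φ l h) (by simp [Lvl.eval])
  | .max a b, h => by
    simp only [Lvl.fv, Finset.mem_union] at h
    simp only [Lvl.eval, le_max_iff]
    rcases h with h | h
    · exact Or.inl (le_eval_update φ a h)
    · exact Or.inr (le_eval_update φ b h)

lemma isMGU_swap {θ : ℕ → Lvl} {l₁ l₂ : Lvl} (h : IsMGU θ l₁ l₂) : IsMGU θ l₂ l₁ := by
  refine ⟨fun φ => (h.1 φ).symm, fun τ hτ => ?_⟩
  obtain ⟨θ', hθ'⟩ := h.2 τ (fun φ => (hτ φ).symm)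
  exact ⟨θ', fun i hi => hθ' i (by rw [Finset.union_comm]; exact hi)⟩

lemma mgu_const_instance {θ : ℕ → Lvl} {l₁ l₂ : Lvl} (h : IsMGU θ l₁ l₂) (ψ : ℕ → ℕ)
    (hψ : Lvl.eval ψ l₁ = Lvl.eval ψ l₂) :
    ∃ φ : ℕ → ℕ, ∀ i ∈ l₁.fv ∪ l₂.fv, Lvl.eval φ (θ i) = ψ i := by
  have hτ : Unifies (fun i => Lvl.const (ψ i)) l₁ l₂ := by
    intro φ'
    rw [eval_subst, eval_subst]
    simp only [eval_const]
    exact hψ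
  obtain ⟨θ', hθ'⟩ := h.2 _ hτ
  refine ⟨fun j => Lvl.eval (fun _ => 0) (θ' j), fun i hi => ?_⟩
  have := hθ' i hi (fun _ => 0)
  rw [eval_subst] at this
  rw [this, eval_const]

end LvlAux

namespace LvlAux

lemma coreA (p n v : ℕ) (L₁ L₂ : List (ℕ × ℕ)) (θ : ℕ → Lvl)
    (hn : n < p)
    (hL₁ : ∀ a ∈ L₁, a.1 ≤ p) (hL₂ : ∀ a ∈ L₂, a.1 ≤ p)
    (hv : (n, v) ∈ L₁) (hv2 : ∀ a ∈ L₂, a.2 ≠ v)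
    (hcv : ∀ a ∈ L₁, a.2 = v → a.1 ≤ n)
    (hmgu : IsMGU θ (buildCanon p L₁) (buildCanon p L₂)) : False := by
  set l₁ := buildCanon p L₁ with hl₁
  set l₂ := buildCanon p L₂ with hl₂
  have hvfv : v ∈ l₁.fv := mem_fv_build (p := p) hv
  have hvU : v ∈ l₁.fv ∪ l₂.fv := Finset.mem_union_left _ hvfv
  -- all-zero instance
  obtain ⟨φ₀, hφ₀⟩ := mgu_const_instance hmgu (fun _ => 0) (by
    have e1 : Lvl.eval (fun _ => 0) l₁ = p :=
      le_antisymm (eval_build_le le_rfl fun a ha => by simpa using hL₁ a ha)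
        (le_eval_build_const p L₁ _)
    have e2 : Lvl.eval (fun _ => 0) l₂ = p :=
      le_antisymm (eval_build_le le_rfl fun a ha => by simpa using hL₂ a ha)
        (le_eval_build_const p L₂ _)
    rw [e1, e2])
  -- instance with v ↦ 1, rest ↦ 0
  set ψ₁ : ℕ → ℕ := Function.update (fun _ => 0) v 1 with hψ₁
  obtain ⟨φ₁, hφ₁⟩ := mgu_const_instance hmgu ψ₁ (by
    have e1 : Lvl.eval ψ₁ l₁ ≤ p := by
      refine eval_build_le le_rfl fun a ha => ?_
      by_cases hav : a.2 = v
      · have := hcv a ha hav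
        rw [hψ₁, hav]
        simp only [Function.update_self]
        omega
      · rw [hψ₁]
        simp only [Function.update_of_ne hav]
        simpa using hL₁ a ha
    have e2 : Lvl.eval ψ₁ l₂ ≤ p := by
      refine eval_build_le le_rfl fun a ha => ?_
      rw [hψ₁]
      simp only [Function.update_of_ne (hv2 a ha)]
      simpa using hL₂ a ha
    have g1 : p ≤ Lvl.eval ψ₁ l₁ := le_eval_build_const p L₁ ψ₁
    have g2 : p ≤ Lvl.eval ψ₁ l₂ := le_eval_build_const p L₂ ψ₁
    omega)
  have h1 : Lvl.eval φ₁ (θ v) = 1 := by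
    have := hφ₁ v hvU
    rwa [hψ₁, Function.update_self] at this
  have h0v : Lvl.eval (fun _ => 0) (θ v) = 0 :=
    Nat.le_zero.1 (le_trans (eval_mono (fun x => Nat.zero_le _) (θ v)) (le_of_eq (hφ₀ v hvU)))
  obtain ⟨x₀, hx₀f, hx₀p⟩ := exists_fv_pos (φ := φ₁) (θ v) h0v (by omega)
  set φs : ℕ → ℕ := Function.update φ₁ x₀ (p + 1) with hφs
  have hbig : p + 1 ≤ Lvl.eval φs (θ v) := le_eval_update φ₁ (θ v) hx₀f
  have hzero : ∀ i ∈ l₁.fv ∪ l₂.fv, i ≠ v → Lvl.eval φs (θ i) = 0 := by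
    intro i hi hiv
    have hz : Lvl.eval φ₁ (θ i) = 0 := by
      have := hφ₁ i hi
      rwa [hψ₁, Function.update_of_ne hiv] at this
    refine eval_zero_of_zero (fun x hx => ?_) (θ i) hz
    rw [hφs]
    rcases eq_or_ne x x₀ with h | h
    · subst h; omega
    · rwa [Function.update_of_ne h]
  have hU := hmgu.1 φs
  rw [eval_subst, eval_subst] at hU
  set ψs : ℕ → ℕ := fun i => Lvl.eval φs (θ i) with hψs
  have hge : n + ψs v ≤ Lvl.eval ψs l₁ := le_eval_build_atom hv ψs
  have hle : Lvl.eval ψs l₂ ≤ p := by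
    refine eval_build_le le_rfl fun a ha => ?_
    have : ψs a.2 = 0 :=
      hzero a.2 (Finset.mem_union_right _ (mem_fv_build ha)) (hv2 a ha)
    rw [this]
    simpa using hL₂ a ha
  have : ψs v = Lvl.eval φs (θ v) := rfl
  omega

lemma coreB (p n v w : ℕ) (L₁ L₂ : List (ℕ × ℕ)) (θ : ℕ → Lvl)
    (hn1 : 0 < n) (hnp : n ≤ p)
    (hL₁ : ∀ a ∈ L₁, a.1 ≤ p) (hL₂ : ∀ a ∈ L₂, a.1 ≤ p)
    (hv : (n, v) ∈ L₁) (hv2 : ∀ a ∈ L₂, a.2 ≠ v)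
    (hcv : ∀ a ∈ L₁, a.2 = v → a.1 ≤ n)
    (hw1 : (0, w) ∈ L₁) (hw2 : (0, w) ∈ L₂)
    (hcw1 : ∀ a ∈ L₁, a.2 = w → a.1 = 0) (hcw2 : ∀ a ∈ L₂, a.2 = w → a.1 = 0)
    (hmgu : IsMGU θ (buildCanon p L₁) (buildCanon p L₂)) : False := by
  set l₁ := buildCanon p L₁ with hl₁
  set l₂ := buildCanon p L₂ with hl₂
  have hwv : w ≠ v := hv2 (0, w) hw2
  have hvfv : v ∈ l₁.fv := mem_fv_build (p := p) hv
  have hvU : v ∈ l₁.fv ∪ l₂.fv := Finset.mem_union_left _ hvfv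
  have hwU : w ∈ l₁.fv ∪ l₂.fv := Finset.mem_union_left _ (mem_fv_build (p := p) hw1)
  obtain ⟨φ₀, hφ₀⟩ := mgu_const_instance hmgu (fun _ => 0) (by
    have e1 : Lvl.eval (fun _ => 0) l₁ = p :=
      le_antisymm (eval_build_le le_rfl fun a ha => by simpa using hL₁ a ha)
        (le_eval_build_const p L₁ _)
    have e2 : Lvl.eval (fun _ => 0) l₂ = p :=
      le_antisymm (eval_build_le le_rfl fun a ha => by simpa using hL₂ a ha)
        (le_eval_build_const p L₂ _)
    rw [e1, e2])
  -- instance with v ↦ 1, w ↦ p+1, rest ↦ 0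
  set ψ₁ : ℕ → ℕ := Function.update (Function.update (fun _ => 0) w (p + 1)) v 1 with hψ₁
  have hψ₁w : ψ₁ w = p + 1 := by
    rw [hψ₁, Function.update_of_ne hwv, Function.update_self]
  have hψ₁v : ψ₁ v = 1 := by rw [hψ₁, Function.update_self]
  have hψ₁o : ∀ i, i ≠ v → i ≠ w → ψ₁ i = 0 := by
    intro i hiv hiw
    rw [hψ₁, Function.update_of_ne hiv, Function.update_of_ne hiw]
  obtain ⟨φ₁, hφ₁⟩ := mgu_const_instance hmgu ψ₁ (by
    have bound : ∀ (L : List (ℕ × ℕ)), (∀ a ∈ L, a.1 ≤ p) → (∀ a ∈ L, a.2 = v → a.1 ≤ n) →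
        (∀ a ∈ L, a.2 = w → a.1 = 0) → Lvl.eval ψ₁ (buildCanon p L) ≤ p + 1 := by
      intro L hL hcvL hcwL
      refine eval_build_le (by omega) fun a ha => ?_
      rcases eq_or_ne a.2 v with h | h
      · have := hcvL a ha h
        rw [h, hψ₁v]
        omega
      rcases eq_or_ne a.2 w with h' | h'
      · have := hcwL a ha h'
        rw [h', hψ₁w]
        omega
      · rw [hψ₁o a.2 h h']
        have := hL a ha
        omega
    have e1 : Lvl.eval ψ₁ l₁ ≤ p + 1 :=
      bound L₁ hL₁ hcv hcw1
    have e2 : Lvl.eval ψ₁ l₂ ≤ p + 1 :=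
      bound L₂ hL₂ (fun a ha hav => absurd hav (hv2 a ha)) hcw2
    have g1 : (0 : ℕ) + ψ₁ w ≤ Lvl.eval ψ₁ l₁ := le_eval_build_atom hw1 ψ₁
    have g2 : (0 : ℕ) + ψ₁ w ≤ Lvl.eval ψ₁ l₂ := le_eval_build_atom hw2 ψ₁
    rw [hψ₁w] at g1 g2
    omega)
  have h1 : Lvl.eval φ₁ (θ v) = 1 := by rw [hφ₁ v hvU, hψ₁v]
  have h0v : Lvl.eval (fun _ => 0) (θ v) = 0 :=
    Nat.le_zero.1 (le_trans (eval_mono (fun x => Nat.zero_le _) (θ v)) (le_of_eq (hφ₀ v hvU)))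
  obtain ⟨x₀, hx₀f, hx₀p⟩ := exists_fv_pos (φ := φ₁) (θ v) h0v (by omega)
  set T : ℕ := p + 1 + (θ w).fv.sup φ₁ with hT
  set φs : ℕ → ℕ := Function.update φ₁ x₀ T with hφs
  set ψs : ℕ → ℕ := fun i => Lvl.eval φs (θ i) with hψs
  have hbig : T ≤ ψs v := le_eval_update φ₁ (θ v) hx₀f
  have hzero : ∀ i ∈ l₁.fv ∪ l₂.fv, i ≠ v → i ≠ w → ψs i = 0 := by
    intro i hi hiv hiw
    have hz : Lvl.eval φ₁ (θ i) = 0 := by rw [hφ₁ i hi, hψ₁o i hiv hiw]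
    refine eval_zero_of_zero (fun x hx => ?_) (θ i) hz
    rw [hφs]
    rcases eq_or_ne x x₀ with h | h
    · subst h; omega
    · rwa [Function.update_of_ne h]
  -- bound on ψs w
  have h0w : Lvl.eval φ₀ (θ w) = 0 := hφ₀ w hwU
  have hwle : ψs w ≤ T := by
    have hsup : Lvl.eval φs (θ w) ≤ (θ w).fv.sup φs := eval_le_fv_sup φs (θ w) h0w
    have : (θ w).fv.sup φs ≤ T := by
      refine Finset.sup_le fun x hx => ?_
      rw [hφs]
      rcases eq_or_ne x x₀ with h | h
      · subst h; rw [Function.update_self]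
      · rw [Function.update_of_ne h]
        have := Finset.le_sup (f := φ₁) hx
        omega
    exact le_trans hsup this
  have hU := hmgu.1 φs
  rw [eval_subst, eval_subst] at hU
  have hU' : Lvl.eval ψs l₁ = Lvl.eval ψs l₂ := hU
  have hge : n + ψs v ≤ Lvl.eval ψs l₁ := le_eval_build_atom hv ψs
  have hle : Lvl.eval ψs l₂ ≤ T := by
    refine eval_build_le (by omega) fun a ha => ?_
    rcases eq_or_ne a.2 w with h | h
    · have := hcw2 a ha h
      rw [h]
      omega
    · have : ψs a.2 = 0 :=
        hzero a.2 (Finset.mem_union_right _ (mem_fv_build ha)) (hv2 a ha) h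
      rw [this]
      have := hL₂ a ha
      omega
  omega

end LvlAux

/-- A non-trivial level equation in canonical form whose two sides have equal and
strictly positive constant coefficients admits a unifier but no most general
unifier. -/
theorem solvable_no_mgu_equal_const (p₁ p₂ : ℕ) (L₁ L₂ : List (ℕ × ℕ))
    (hcanon : CanonEqn p₁ L₁ p₂ L₂)
    (hnontriv : ¬ Lvl.Equiv (buildCanon p₁ L₁) (buildCanon p₂ L₂))
    (heq : p₁ = p₂) (hpos : 0 < p₁) :
    (∃ θ, Unifies θ (buildCanon p₁ L₁) (buildCanon p₂ L₂)) ∧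
      ¬ ∃ θ, IsMGU θ (buildCanon p₁ L₁) (buildCanon p₂ L₂) := by
  subst heq
  obtain ⟨h1, h2, h3, h4, h5, h6⟩ := hcanon
  constructor
  · refine ⟨fun _ => Lvl.zero, fun φ => ?_⟩
    rw [LvlAux.eval_subst, LvlAux.eval_subst]
    have e1 : Lvl.eval (fun i => Lvl.eval φ Lvl.zero) (buildCanon p₁ L₁) = p₁ :=
      le_antisymm (LvlAux.eval_build_le le_rfl fun a ha => by
          simpa [Lvl.eval] using h1 a ha)
        (LvlAux.le_eval_build_const _ _ _)
    have e2 : Lvl.eval (fun i => Lvl.eval φ Lvl.zero) (buildCanon p₁ L₂) = p₁ :=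
      le_antisymm (LvlAux.eval_build_le le_rfl fun a ha => by
          simpa [Lvl.eval] using h3 a ha)
        (LvlAux.le_eval_build_const _ _ _)
    rw [e1, e2]
  · rintro ⟨θ, hmgu⟩
    -- there is a one-sided variable
    have hside : ∃ a : ℕ × ℕ, (a ∈ L₁ ∧ ∀ b ∈ L₂, b.2 ≠ a.2) ∨
        (a ∈ L₂ ∧ ∀ b ∈ L₁, b.2 ≠ a.2) := by
      by_contra hno
      push_neg at hno
      refine hnontriv fun φ => ?_
      apply le_antisymm
      · refine LvlAux.eval_build_le (LvlAux.le_eval_build_const _ _ _) fun a ha => ?_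
        obtain ⟨b, hb, hba⟩ := (hno a).1 ha
        have hco : a.1 = b.1 := h5 a ha b hb hba.symm
        rw [hco, ← hba]
        exact LvlAux.le_eval_build_atom hb φ
      · refine LvlAux.eval_build_le (LvlAux.le_eval_build_const _ _ _) fun a ha => ?_
        obtain ⟨b, hb, hba⟩ := (hno a).2 ha
        have hco : b.1 = a.1 := h5 b hb a ha hba
        rw [← hco, ← hba]
        exact LvlAux.le_eval_build_atom hb φ
    -- there is a variable with coefficient zero
    have hzv : ∃ u, (0, u) ∈ L₁ ∨ (0, u) ∈ L₂ := by
      simp only [List.mem_cons, List.mem_map, List.mem_append] at h6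
      rcases h6 with h | h | ⟨⟨m, u⟩, hmem, hm0⟩
      · omega
      · omega
      · simp only at hm0
        subst hm0
        exact ⟨u, hmem⟩
    by_cases hA : ∃ a : ℕ × ℕ, ((a ∈ L₁ ∧ ∀ b ∈ L₂, b.2 ≠ a.2) ∨
        (a ∈ L₂ ∧ ∀ b ∈ L₁, b.2 ≠ a.2)) ∧ a.1 < p₁
    · obtain ⟨a, hor, hlt⟩ := hA
      rcases hor with ⟨haL, hnot⟩ | ⟨haL, hnot⟩
      · exact LvlAux.coreA p₁ a.1 a.2 L₁ L₂ θ hlt h1 h3 haL hnot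
          (fun c hc hcv => le_of_eq (congrArg Prod.fst
            (List.inj_on_of_nodup_map h2 hc haL hcv))) hmgu
      · exact LvlAux.coreA p₁ a.1 a.2 L₂ L₁ θ hlt h3 h1 haL hnot
          (fun c hc hcv => le_of_eq (congrArg Prod.fst
            (List.inj_on_of_nodup_map h4 hc haL hcv))) (LvlAux.isMGU_swap hmgu)
    · push_neg at hA
      obtain ⟨a, hor⟩ := hside
      obtain ⟨u, hu⟩ := hzv
      have hap : p₁ ≤ a.1 := hA a hor
      have hw12 : (0, u) ∈ L₁ ∧ (0, u) ∈ L₂ := by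
        rcases hu with hu | hu
        · refine ⟨hu, ?_⟩
          by_cases hex : ∀ b ∈ L₂, b.2 ≠ (0, u).2
          · have := hA (0, u) (Or.inl ⟨hu, hex⟩)
            simp only at this
            omega
          · push_neg at hex
            obtain ⟨b, hb, hbu⟩ := hex
            have hb1 : (0 : ℕ) = b.1 := h5 (0, u) hu b hb (by simpa using hbu.symm)
            have hbeq : b = (0, u) := by
              obtain ⟨b1, b2⟩ := b
              simp only at hbu hb1
              simp [← hb1, hbu]
            rwa [hbeq] at hb
        · refine ⟨?_, hu⟩
          by_cases hex : ∀ b ∈ L₁, b.2 ≠ (0, u).2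
          · have := hA (0, u) (Or.inr ⟨hu, hex⟩)
            simp only at this
            omega
          · push_neg at hex
            obtain ⟨b, hb, hbu⟩ := hex
            have hb1 : b.1 = 0 := h5 b hb (0, u) hu (by simpa using hbu)
            have hbeq : b = (0, u) := by
              obtain ⟨b1, b2⟩ := b
              simp only at hbu hb1
              simp [hb1, hbu]
            rwa [hbeq] at hb
      rcases hor with ⟨haL, hnot⟩ | ⟨haL, hnot⟩
      · exact LvlAux.coreB p₁ a.1 a.2 u L₁ L₂ θ (by omega) (h1 a haL) h1 h3 haL hnot
          (fun c hc hcv => le_of_eq (congrArg Prod.fst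
            (List.inj_on_of_nodup_map h2 hc haL hcv)))
          hw12.1 hw12.2
          (fun c hc hcu => congrArg Prod.fst
            (List.inj_on_of_nodup_map h2 hc hw12.1 hcu))
          (fun c hc hcu => congrArg Prod.fst
            (List.inj_on_of_nodup_map h4 hc hw12.2 hcu))
          hmgu
      · exact LvlAux.coreB p₁ a.1 a.2 u L₂ L₁ θ (by omega) (h3 a haL) h3 h1 haL hnot
          (fun c hc hcv => le_of_eq (congrArg Prod.fst
            (List.inj_on_of_nodup_map h4 hc haL hcv)))
          hw12.2 hw12.1
          (fun c hc hcu => congrArg Prod.fst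
            (List.inj_on_of_nodup_map h4 hc hw12.2 hcu))
          (fun c hc hcu => congrArg Prod.fst
            (List.inj_on_of_nodup_map h2 hc hw12.1 hcu))
          (LvlAux.isMGU_swap hmgu)
end

section
/- Suppose a level equation l₁ ≐ l₂ admits a unifier θ and a most general unifier τ. If i is a variable of the equation with i[θ] ≃ 0, then i[τ] is flat, i.e., contains no occurrence of the successor S. -/
/-- A level is flat when it contains no occurrence of the successor `S`. -/
def Lvl.Flat : Lvl → Prop
  | .var _ => True
  | .zero => True
  | .succ _ => False
  | .max a b => a.Flat ∧ b.Flat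

lemma flat_of_subst_zero (l : Lvl) (σ : ℕ → Lvl)
    (h : Lvl.Equiv (l.subst σ) Lvl.zero) : l.Flat := by
  induction l with
  | var i => trivial
  | zero => trivial
  | succ l ih => exact absurd (h (fun _ => 0)) (by simp [Lvl.subst, Lvl.eval])
  | max a b iha ihb =>
    refine ⟨iha ?_, ihb ?_⟩ <;> intro φ <;> have := h φ <;>
      simp [Lvl.subst, Lvl.eval] at this ⊢ <;> omega

/-- If a level equation admits a unifier `θ` and a most general unifier `τ`, and
`i` is a variable of the equation with `i[θ] ≃ 0`, then `i[τ]` is flat. -/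
theorem mgu_flat_of_unifier_zero (l₁ l₂ : Lvl) (θ τ : ℕ → Lvl)
    (hθ : Unifies θ l₁ l₂) (hτ : IsMGU τ l₁ l₂)
    (i : ℕ) (hi : i ∈ l₁.fv ∪ l₂.fv) (h0 : Lvl.Equiv (θ i) Lvl.zero) :
    (τ i).Flat := by
  obtain ⟨_, hmax⟩ := hτ
  obtain ⟨θ', hθ'⟩ := hmax θ hθ
  apply flat_of_subst_zero (τ i) θ'
  intro φ
  rw [hθ' i hi φ, h0 φ]
end
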